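/- Dynamic-programming optimality of the branching policy: let p : Π_{t} {0,1}^t → ℝ≥0 assign a score to every binary sequence, and suppose that for every sequence δ of length t with δ[t_0] = 1 (for some t_0 ≤ t), writing δ = (δ_1, 1, δ_2), we have p(δ) ≤ p((δ̂, 1, δ_2)) where δ̂ is a fixed maximizer of p over sequences of length t_0 − 1. Define the filter bank F_t recursively: F_0 = {(0), (1)}, and F_{t+1} is obtained from F_t by appending 0 to every member, and additionally appending 1 to (a copy of) every member f of F_t with p(f) = max_{f' ∈ F_t} p(f'). Then for every t, F_t contains a maximizer of p over all binary sequences of length t+1. -/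
import Mathlib


open scoped NNReal Classical

/-- The filter bank of the OEDFB algorithm with `p_thres = 0`:
`F₀ = {(0),(1)}`; `F_{t+1}` is obtained from `F_t` by appending `0` to every
member and appending `1` to every member attaining the maximal score. -/
noncomputable def filterBank (p : List Bool → ℝ≥0) : ℕ → Finset (List Bool)
  | 0 => {[false], [true]}
  | t + 1 =>
      (filterBank p t).image (fun f => f ++ [false]) ∪
      ((filterBank p t).filter
        (fun f => ∀ f' ∈ filterBank p t, p f' ≤ p f)).image (fun f => f ++ [true])

lemma filterBank_length (p : List Bool → ℝ≥0) :
    ∀ t, ∀ f ∈ filterBank p t, f.length = t + 1 := by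
  intro t
  induction t with
  | zero =>
    intro f hf
    simp only [filterBank, Finset.mem_insert, Finset.mem_singleton] at hf
    rcases hf with h | h <;> simp [h]
  | succ t ih =>
    intro f hf
    simp only [filterBank, Finset.mem_union, Finset.mem_image, Finset.mem_filter] at hf
    rcases hf with ⟨g, hg, rfl⟩ | ⟨g, ⟨hg, _⟩, rfl⟩ <;>
      simp [ih g hg]

lemma appendFalse (p : List Bool → ℝ≥0) {t : ℕ} {f : List Bool}
    (hf : f ∈ filterBank p t) :
    ∀ k, f ++ List.replicate k false ∈ filterBank p (t + k) := by
  intro k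
  induction k with
  | zero => simpa using hf
  | succ k ih =>
    have h : f ++ List.replicate (k + 1) false
        = (f ++ List.replicate k false) ++ [false] := by
      rw [List.replicate_succ', ← List.append_assoc]
    rw [h, show t + (k + 1) = (t + k) + 1 from rfl]
    show _ ∈ filterBank p ((t + k) + 1)
    simp only [filterBank, Finset.mem_union, Finset.mem_image]
    exact Or.inl ⟨_, ih, rfl⟩

lemma appendTrue (p : List Bool → ℝ≥0) {t : ℕ} {f : List Bool}
    (hf : f ∈ filterBank p t) (hm : ∀ f' ∈ filterBank p t, p f' ≤ p f) :
    f ++ [true] ∈ filterBank p (t + 1) := by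
  show _ ∈ filterBank p (t + 1)
  simp only [filterBank, Finset.mem_union, Finset.mem_image, Finset.mem_filter]
  exact Or.inr ⟨f, ⟨hf, hm⟩, rfl⟩

lemma decompLast : ∀ δ : List Bool,
    (∃ k, δ = List.replicate k false) ∨
    ∃ a k, δ = a ++ [true] ++ List.replicate k false := by
  intro δ
  induction δ using List.reverseRecOn with
  | nil => exact Or.inl ⟨0, rfl⟩
  | append_singleton δ' b ih =>
    cases b with
    | true => exact Or.inr ⟨δ', 0, by simp⟩
    | false =>
      rcases ih with ⟨k, rfl⟩ | ⟨a, k, rfl⟩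
      · exact Or.inl ⟨k + 1, by rw [List.replicate_succ']⟩
      · exact Or.inr ⟨a, k + 1, by rw [List.replicate_succ', ← List.append_assoc]⟩

lemma key_lemma (p : List Bool → ℝ≥0)
    (δhat : ℕ → List Bool) (hlen : ∀ n, (δhat n).length = n)
    (hhatmax : ∀ n, ∀ δ : List Bool, δ.length = n → p δ ≤ p (δhat n))
    (hpartialMAP : ∀ δ₁ δ₂ : List Bool,
      p (δ₁ ++ [true] ++ δ₂) ≤ p (δhat δ₁.length ++ [true] ++ δ₂)) :
    ∀ t : ℕ, ∃ f ∈ filterBank p t,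
      ∀ δ₂ : List Bool, p (δhat (t + 1) ++ δ₂) ≤ p (f ++ δ₂) := by
  intro t
  induction t using Nat.strong_induction_on with
  | _ t ih =>
  rcases decompLast (δhat (t + 1)) with ⟨k, hk⟩ | ⟨a, k, hk⟩
  · -- δhat (t+1) is all false
    have hk' : k = t + 1 := by
      have h := hlen (t + 1); rw [hk] at h; simpa using h
    refine ⟨List.replicate (t + 1) false, ?_, ?_⟩
    · have h0 : [false] ∈ filterBank p 0 := by
        simp [filterBank]
      have := appendFalse p h0 t
      have he : [false] ++ List.replicate t false = List.replicate (t + 1) false := by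
        rw [List.replicate_succ]; rfl
      rwa [he, Nat.zero_add] at this
    · intro δ₂; rw [hk, hk']
  · -- δhat (t+1) = a ++ [true] ++ replicate k false
    have hsum : a.length + 1 + k = t + 1 := by
      have h := hlen (t + 1); rw [hk] at h
      simp [List.length_append, List.length_replicate] at h; omega
    rcases Nat.eq_zero_or_pos a.length with h0 | hpos
    · -- a = []
      have ha : a = [] := List.length_eq_zero_iff.mp h0
      have hkt : k = t := by omega
      refine ⟨δhat (t + 1), ?_, fun δ₂ => le_refl _⟩
      subst hkt
      have h1 : [true] ∈ filterBank p 0 := by simp [filterBank]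
      have := appendFalse p h1 k
      rw [hk, ha, List.nil_append]
      rwa [Nat.zero_add] at this
    · -- a.length ≥ 1
      set n := a.length with hn
      have hlt : n - 1 < t := by omega
      obtain ⟨f', hf', hdom⟩ := ih (n - 1) hlt
      have hn1 : (n - 1) + 1 = n := Nat.succ_pred_eq_of_pos hpos
      rw [hn1] at hdom
      have hmax : ∀ f'' ∈ filterBank p (n - 1), p f'' ≤ p f' := by
        intro f'' hf''
        have hl : f''.length = n := by
          rw [filterBank_length p _ f'' hf'', hn1]
        calc p f'' ≤ p (δhat n) := hhatmax n f'' hl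
          _ = p (δhat n ++ []) := by rw [List.append_nil]
          _ ≤ p (f' ++ []) := hdom []
          _ = p f' := by rw [List.append_nil]
      have hft : f' ++ [true] ∈ filterBank p ((n - 1) + 1) := appendTrue p hf' hmax
      have hmem := appendFalse p hft k
      have hidx : (n - 1) + 1 + k = t := by omega
      rw [hidx] at hmem
      refine ⟨(f' ++ [true]) ++ List.replicate k false, hmem, ?_⟩
      intro δ₂
      rw [hk]
      calc p ((a ++ [true] ++ List.replicate k false) ++ δ₂)
          = p (a ++ [true] ++ (List.replicate k false ++ δ₂)) := by
            rw [List.append_assoc]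
        _ ≤ p (δhat a.length ++ [true] ++ (List.replicate k false ++ δ₂)) :=
            hpartialMAP a _
        _ = p (δhat n ++ ([true] ++ (List.replicate k false ++ δ₂))) := by
            rw [List.append_assoc]
        _ ≤ p (f' ++ ([true] ++ (List.replicate k false ++ δ₂))) :=
            hdom _
        _ = p ((f' ++ [true]) ++ List.replicate k false ++ δ₂) := by
            simp [List.append_assoc]

/-- Optimality of the branching policy (Theorem 2): if the score `p` satisfies
the partial-MAP property (replacing the prefix before a change by a prefix
maximizer does not decrease the score), then for every `t` the filter bank
`F_t` contains a maximizer of `p` over all binary sequences of length `t+1`. -/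
theorem optimality_of_branching_policy
    (p : List Bool → ℝ≥0)
    (δhat : ℕ → List Bool) (hlen : ∀ n, (δhat n).length = n)
    (hhatmax : ∀ n, ∀ δ : List Bool, δ.length = n → p δ ≤ p (δhat n))
    (hpartialMAP : ∀ δ₁ δ₂ : List Bool,
      p (δ₁ ++ [true] ++ δ₂) ≤ p (δhat δ₁.length ++ [true] ++ δ₂)) :
    ∀ t : ℕ, ∃ f ∈ filterBank p t,
      ∀ δ : List Bool, δ.length = t + 1 → p δ ≤ p f := by
  intro t
  obtain ⟨f, hf, hdom⟩ := key_lemma p δhat hlen hhatmax hpartialMAP t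
  refine ⟨f, hf, fun δ hδ => ?_⟩
  calc p δ ≤ p (δhat (t + 1)) := hhatmax _ _ hδ
    _ = p (δhat (t + 1) ++ []) := by rw [List.append_nil]
    _ ≤ p (f ++ []) := hdom []
    _ = p f := by rw [List.append_nil]
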